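/- arXiv:2605.29991 — 2 statements merged into one kernel-verified Lean document; each statement's English description precedes it below -/
import Mathlib

section
/- Let n = 2m+1 and q ≠ 0, |q| arbitrary nonzero. Define Θ_n(q,x) = Σ_{j=0}^n q^{j(j+1)/2} x^j and Ψ_m(q) = Σ_{k=0}^m (−1)^k (2k+1) q^{k(k+1)/2}. If Ψ_m(q) = 0, then x = −q^{−(m+1)} is a multiple zero of Θ_{2m+1}(q, ·), i.e. Θ_{2m+1}(q, −q^{−(m+1)}) = 0 and ∂_x Θ_{2m+1}(q, −q^{−(m+1)}) = 0. -/
open Finset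


lemma tri_div (a : ℕ) : a * (a + 1) / 2 * 2 = a * (a + 1) :=
  Nat.div_mul_cancel (Nat.even_mul_succ_self a).two_dvd

lemma exp_symm (m a b : ℕ) (hab : a + b = 2 * m + 1) :
    a * (a + 1) / 2 + (m + 1) * b = b * (b + 1) / 2 + (m + 1) * a := by
  apply Nat.eq_of_mul_eq_mul_right (show 0 < 2 by norm_num)
  simp only [Nat.add_mul, tri_div]
  zify at hab ⊢
  linear_combination ((a : ℤ) - b) * hab

lemma neg_one_pow_sub' (a b : ℕ) (h : b ≤ a) : (-1:ℂ)^(a-b) = (-1)^a * (-1)^b := by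
  have h2 : (-1:ℂ)^b * (-1)^b = 1 := by
    rw [← pow_add]; exact Even.neg_one_pow ⟨b, by ring⟩
  calc (-1:ℂ)^(a-b) = (-1)^(a-b) * ((-1)^b * (-1)^b) := by rw [h2, mul_one]
    _ = ((-1)^(a-b) * (-1)^b) * (-1)^b := by ring
    _ = (-1:ℂ)^a * (-1)^b := by rw [← pow_add, Nat.sub_add_cancel h]

lemma exp_symm2 (m k : ℕ) (hk : k ≤ m) :
    (m-k) * ((m-k) + 1) / 2 + (m+1) * (2*m+1 - (m-k)) + m*(m+1)/2
      = k * (k+1) / 2 + (m+1) * (2*m+1) := by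
  apply Nat.eq_of_mul_eq_mul_right (show 0 < 2 by norm_num)
  simp only [Nat.add_mul, tri_div]
  have h1 : m - k ≤ 2*m+1 := by omega
  zify [Nat.cast_sub hk, Nat.cast_sub h1] at *
  ring

lemma hE_symm (m j : ℕ) (hj : j ≤ 2*m+1) :
    (2*m+1-j)*((2*m+1-j)+1)/2 + (m+1)*(2*m+1-(2*m+1-j))
      = j*(j+1)/2 + (m+1)*(2*m+1-j) := by
  have h2 : 2*m+1 - (2*m+1-j) = j := by omega
  rw [h2]
  exact (exp_symm m j (2*m+1-j) (by omega)).symm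

lemma hsign (m j : ℕ) (hj : j ≤ 2*m+1) : (-1:ℂ)^(2*m+1-j) = -(-1)^j := by
  rw [neg_one_pow_sub' (2*m+1) j hj]
  have h : (-1:ℂ)^(2*m+1) = -1 := Odd.neg_one_pow ⟨m, by ring⟩
  rw [h, neg_one_mul]

lemma sumA (m : ℕ) (q : ℂ) :
    ∑ j ∈ range (2*m+2), (-1:ℂ)^j * q^(j*(j+1)/2 + (m+1)*(2*m+1-j)) = 0 := by
  set f : ℕ → ℂ := fun j => (-1:ℂ)^j * q^(j*(j+1)/2 + (m+1)*(2*m+1-j)) with hf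
  have hrefl : ∑ j ∈ range (2*m+2), f (2*m+1-j) = ∑ j ∈ range (2*m+2), f j := by
    have h := Finset.sum_range_reflect f (2*m+2)
    simpa using h
  have h2f : (∑ j ∈ range (2*m+2), f j) + (∑ j ∈ range (2*m+2), f j) = 0 := by
    nth_rewrite 2 [← hrefl]
    rw [← Finset.sum_add_distrib]
    refine Finset.sum_eq_zero fun j hj => ?_
    have hj' : j ≤ 2*m+1 := by simp [Finset.mem_range] at hj; omega
    simp only [hf]
    rw [hE_symm m j hj', hsign m j hj']
    ring
  exact add_self_eq_zero.mp h2f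

lemma sumB (m : ℕ) (q : ℂ) :
    (∑ j ∈ range (2*m+2), (j:ℂ) * ((-1)^j * q^(j*(j+1)/2 + (m+1)*(2*m+1-j)))) * q^(m*(m+1)/2)
      = (-1)^(m+1) * (∑ k ∈ range (m+1), (-1:ℂ)^k * (2*k+1) * q^(k*(k+1)/2)) * q^((m+1)*(2*m+1)) := by
  set g : ℕ → ℂ := fun j => (j:ℂ) * ((-1)^j * q^(j*(j+1)/2 + (m+1)*(2*m+1-j))) with hg
  have hsplit : ∑ j ∈ range (2*m+2), g j
      = ∑ j ∈ range (m+1), (g j + g (2*m+1-j)) := by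
    rw [Finset.sum_add_distrib]
    have h3 := Finset.sum_Ico_reflect g 0 (show m+1 ≤ 2*m+1+1 by omega)
    have h2 := Finset.sum_Ico_consecutive g (show (0:ℕ) ≤ m+1 by omega) (show m+1 ≤ 2*m+2 by omega)
    have e1 : 2*m+1+1 - (m+1) = m+1 := by omega
    have e2 : 2*m+1+1 - 0 = 2*m+2 := by omega
    rw [e1, e2] at h3
    rw [Finset.range_eq_Ico, ← h2, ← h3, Finset.range_eq_Ico]
  rw [hsplit, Finset.sum_mul, Finset.mul_sum, Finset.sum_mul]
  have hrefl2 : ∀ F : ℕ → ℂ, ∑ j ∈ range (m+1), F (m-j) = ∑ j ∈ range (m+1), F j := by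
    intro F
    have h := Finset.sum_range_reflect F (m+1)
    simpa using h
  rw [← hrefl2 (fun k => (-1:ℂ)^(m+1) * ((-1:ℂ)^k * (2*k+1) * q^(k*(k+1)/2)) * q^((m+1)*(2*m+1)))]
  refine Finset.sum_congr rfl fun k hk => ?_
  have hk' : k ≤ m := by simp [Finset.mem_range] at hk; omega
  have hk2 : k ≤ 2*m+1 := by omega
  simp only [hg]
  rw [hE_symm m k hk2, hsign m k hk2]
  have hEc := exp_symm2 m (m-k) (by omega : m-k ≤ m)
  rw [show m-(m-k) = k by omega] at hEc
  have hcomb : q^(k*(k+1)/2 + (m+1)*(2*m+1-k)) * q^(m*(m+1)/2)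
      = q^((m-k)*((m-k)+1)/2) * q^((m+1)*(2*m+1)) := by
    rw [← pow_add, hEc, pow_add]
  have hc1 : ((m-k : ℕ) : ℂ) = (m:ℂ) - k := by push_cast [Nat.cast_sub hk']; ring
  have hc2 : ((2*m+1-k : ℕ) : ℂ) = 2*(m:ℂ)+1 - k := by push_cast [Nat.cast_sub hk2]; ring
  rw [neg_one_pow_sub' m k hk', hc1, hc2]
  have hsq : (-1:ℂ)^m * (-1)^m = 1 := by
    rw [← pow_add]; exact Even.neg_one_pow ⟨m, by ring⟩
  calc ((k:ℂ) * ((-1)^k * q^(k*(k+1)/2 + (m+1)*(2*m+1-k)))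
          + (2*(m:ℂ)+1-k) * (-(-1:ℂ)^k * q^(k*(k+1)/2 + (m+1)*(2*m+1-k)))) * q^(m*(m+1)/2)
      = (2*(k:ℂ) - (2*m+1)) * (-1)^k * (q^(k*(k+1)/2 + (m+1)*(2*m+1-k)) * q^(m*(m+1)/2)) := by ring
    _ = (2*(k:ℂ) - (2*m+1)) * (-1)^k * (q^((m-k)*((m-k)+1)/2) * q^((m+1)*(2*m+1))) := by rw [hcomb]
    _ = (-1:ℂ)^(m+1) * ((-1:ℂ)^m * (-1)^k * (2*((m:ℂ)-k)+1) * q^((m-k)*((m-k)+1)/2)) * q^((m+1)*(2*m+1)) := by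
        rw [pow_succ]
        linear_combination ((-1:ℂ)^k * q^((m-k)*((m-k)+1)/2) * q^((m+1)*(2*m+1)) * (2*(m:ℂ)-2*k+1)) * hsq

/-- central spectral factor for odd truncations: if
`Ψ_m(q) = Σ_{k=0}^m (−1)^k (2k+1) q^{k(k+1)/2} = 0` and `q ≠ 0`, then
`x = −q^{−(m+1)}` is a multiple zero of the truncation
`Θ_{2m+1}(q,x) = Σ_{j=0}^{2m+1} q^{j(j+1)/2} x^j`. -/
theorem central_spectral_factor (m : ℕ) (q : ℂ) (hq : q ≠ 0)
    (hPsi : ∑ k ∈ range (m + 1), (-1 : ℂ) ^ k * (2 * k + 1) * q ^ (k * (k + 1) / 2) = 0) :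
    (∑ j ∈ range (2 * m + 2), q ^ (j * (j + 1) / 2) * (-q ^ (-(m + 1 : ℤ))) ^ j = 0) ∧
    deriv (fun x : ℂ => ∑ j ∈ range (2 * m + 2), q ^ (j * (j + 1) / 2) * x ^ j)
      (-q ^ (-(m + 1 : ℤ))) = 0 := by
  set x0 : ℂ := -q ^ (-(m + 1 : ℤ)) with hx0def
  have hinv : q ^ (-(m + 1 : ℤ)) = (q ^ (m+1 : ℕ))⁻¹ := by
    rw [zpow_neg]; norm_cast
  have hx0ne : x0 ≠ 0 := by
    rw [hx0def, hinv]
    simp [pow_ne_zero, hq]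
  have hterm : ∀ j, j ≤ 2*m+1 → q ^ (j*(j+1)/2) * x0 ^ j * q ^ ((m+1)*(2*m+1))
      = (-1:ℂ)^j * q ^ (j*(j+1)/2 + (m+1)*(2*m+1-j)) := by
    intro j hj
    have h1 : (m+1)*(2*m+1) = (m+1)*(2*m+1-j) + (m+1)*j := by
      rw [← Nat.mul_add]
      congr 1
      omega
    have hxj : x0 ^ j = (-1:ℂ)^j * (q ^ ((m+1)*j))⁻¹ := by
      rw [hx0def, hinv, neg_pow, inv_pow, ← pow_mul]
    calc q ^ (j*(j+1)/2) * x0 ^ j * q ^ ((m+1)*(2*m+1))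
        = q^(j*(j+1)/2) * ((-1:ℂ)^j * (q^((m+1)*j))⁻¹) * (q^((m+1)*(2*m+1-j)) * q^((m+1)*j)) := by
          rw [hxj, h1, pow_add]
      _ = (-1:ℂ)^j * (q^(j*(j+1)/2) * q^((m+1)*(2*m+1-j))) * ((q^((m+1)*j))⁻¹ * q^((m+1)*j)) := by
          ring
      _ = (-1:ℂ)^j * q^(j*(j+1)/2 + (m+1)*(2*m+1-j)) := by
          rw [inv_mul_cancel₀ (pow_ne_zero _ hq), pow_add, mul_one]
  constructor
  · have hS : (∑ j ∈ range (2*m+2), q^(j*(j+1)/2) * x0^j) * q^((m+1)*(2*m+1))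
        = ∑ j ∈ range (2*m+2), (-1:ℂ)^j * q^(j*(j+1)/2 + (m+1)*(2*m+1-j)) := by
      rw [Finset.sum_mul]
      exact Finset.sum_congr rfl fun j hj =>
        hterm j (by simp [Finset.mem_range] at hj; omega)
    have h0 := hS.trans (sumA m q)
    rcases mul_eq_zero.mp h0 with h | h
    · exact h
    · exact absurd h (pow_ne_zero _ hq)
  · have hD : deriv (fun x : ℂ => ∑ j ∈ range (2*m+2), q^(j*(j+1)/2) * x^j) x0
        = ∑ j ∈ range (2*m+2), q^(j*(j+1)/2) * ((j:ℂ) * x0^(j-1)) := by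
      rw [deriv_fun_sum (fun j _ => (differentiableAt_pow j).const_mul _)]
      exact Finset.sum_congr rfl fun j _ => by
        rw [deriv_const_mul _ (differentiableAt_pow j), deriv_pow_field]
    have hxD : x0 * deriv (fun x : ℂ => ∑ j ∈ range (2*m+2), q^(j*(j+1)/2) * x^j) x0
          * q^((m+1)*(2*m+1))
        = ∑ j ∈ range (2*m+2), (j:ℂ) * ((-1)^j * q^(j*(j+1)/2 + (m+1)*(2*m+1-j))) := by
      rw [hD, Finset.mul_sum, Finset.sum_mul]
      refine Finset.sum_congr rfl fun j hj => ?_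
      have hj' : j ≤ 2*m+1 := by simp [Finset.mem_range] at hj; omega
      have hx0j : (j:ℂ) * (x0 * x0^(j-1)) = (j:ℂ) * x0^j := by
        cases j with
        | zero => simp
        | succ k => rw [Nat.add_sub_cancel, ← pow_succ']
      calc x0 * (q^(j*(j+1)/2) * ((j:ℂ) * x0^(j-1))) * q^((m+1)*(2*m+1))
          = ((j:ℂ) * (x0 * x0^(j-1))) * (q^(j*(j+1)/2) * q^((m+1)*(2*m+1))) := by ring
        _ = ((j:ℂ) * x0^j) * (q^(j*(j+1)/2) * q^((m+1)*(2*m+1))) := by rw [hx0j]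
        _ = (j:ℂ) * (q^(j*(j+1)/2) * x0^j * q^((m+1)*(2*m+1))) := by ring
        _ = (j:ℂ) * ((-1:ℂ)^j * q^(j*(j+1)/2 + (m+1)*(2*m+1-j))) := by rw [hterm j hj']
    have hfin : x0 * deriv (fun x : ℂ => ∑ j ∈ range (2*m+2), q^(j*(j+1)/2) * x^j) x0
          * q^((m+1)*(2*m+1)) * q^(m*(m+1)/2)
        = (-1:ℂ)^(m+1) * 0 * q^((m+1)*(2*m+1)) := by
      rw [hxD, sumB m q, hPsi]
    rw [mul_zero, zero_mul] at hfin
    rcases mul_eq_zero.mp hfin with h | h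
    · rcases mul_eq_zero.mp h with h' | h'
      · rcases mul_eq_zero.mp h' with h'' | h''
        · exact absurd h'' hx0ne
        · exact h''
      · exact absurd h' (pow_ne_zero _ hq)
    · exact absurd h (pow_ne_zero _ hq)
end

section
/- Let q ≠ 0 with |q| < 1, N ≥ 1, and set x = −q^{−N} e^u. Then Θ(q,x) = 0 and ∂_x Θ(q,x) = 0 hold simultaneously if and only if H_N(q,u) = 0 and ∂_u H_N(q,u) = 0 hold simultaneously, where H_N(q,u) = Σ_{s=−N}^∞ (−1)^s q^{s(s+1)/2} e^{su}. -/
/-- The partial theta function `Θ(q,x) = Σ_{j≥0} q^{j(j+1)/2} x^j`. -/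
noncomputable def partialTheta (q x : ℂ) : ℂ :=
  ∑' j : ℕ, q ^ (j * (j + 1) / 2) * x ^ j

/-- The moving-window series `H_N(q,u) = Σ_{s=−N}^∞ (−1)^s q^{s(s+1)/2} e^{su}`,
parametrized by `s = t − N`, `t ∈ ℕ`. -/
noncomputable def movingWindowH (N : ℕ) (q u : ℂ) : ℂ :=
  ∑' t : ℕ, (-1 : ℂ) ^ ((t : ℤ) - N) *
    q ^ ((((t : ℤ) - N) * (((t : ℤ) - N) + 1)) / 2) *
    Complex.exp (((t : ℤ) - N) * u)

open Filter in
lemma partialTheta_differentiableAt (q : ℂ) (hq0 : q ≠ 0) (hq : ‖q‖ < 1) (y : ℂ) :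
    DifferentiableAt ℂ (partialTheta q) y := by
  set c : ℕ → ℂ := fun n => q ^ (n * (n + 1) / 2) with hc
  set p := FormalMultilinearSeries.ofScalars ℂ c with hp
  have hratio : Tendsto (fun n => ‖c (n + 1)‖ / ‖c n‖) atTop (nhds 0) := by
    have h1 : Tendsto (fun n : ℕ => ‖q‖ ^ (n + 1)) atTop (nhds 0) :=
      (tendsto_pow_atTop_nhds_zero_of_lt_one (norm_nonneg q) hq).comp
        (tendsto_add_atTop_nat 1)
    refine h1.congr fun n => ?_
    obtain ⟨k, hk⟩ := Nat.even_mul_succ_self n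
    have e1 : n * (n + 1) / 2 = k := by omega
    have e2 : (n + 1) * ((n + 1) + 1) / 2 = k + (n + 1) := by
      have h : (n + 1) * ((n + 1) + 1) = (k + k) + 2 * (n + 1) := by rw [← hk]; ring
      omega
    simp only [hc, norm_pow, e1, e2]
    rw [eq_div_iff (pow_ne_zero k (norm_ne_zero_iff.mpr hq0))]
    ring
  have hrad : p.radius = ⊤ :=
    FormalMultilinearSeries.ofScalars_radius_eq_top_of_tendsto ℂ c
      (Eventually.of_forall fun n => pow_ne_zero _ hq0) hratio
  have hball : HasFPowerSeriesOnBall p.sum p 0 p.radius :=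
    p.hasFPowerSeriesOnBall (by rw [hrad]; exact ENNReal.zero_lt_top)
  have hsum : partialTheta q = p.sum := by
    funext z
    unfold partialTheta FormalMultilinearSeries.sum
    refine tsum_congr fun n => ?_
    rw [hp, FormalMultilinearSeries.ofScalars_apply_eq, smul_eq_mul]
  rw [hsum]
  have hmem : y ∈ EMetric.ball (0 : ℂ) p.radius := by
    rw [hrad]; exact edist_lt_top y 0
  exact hball.differentiableOn.differentiableAt (EMetric.isOpen_ball.mem_nhds hmem)

lemma movingWindowH_eq (q : ℂ) (hq0 : q ≠ 0) (N : ℕ) (v : ℂ) :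
    movingWindowH N q v = ((-1 : ℂ) ^ N * q ^ (((N : ℤ) * ((N : ℤ) - 1)) / 2)) *
      (Complex.exp (-(N : ℂ) * v) * partialTheta q (-q ^ (-(N : ℤ)) * Complex.exp v)) := by
  unfold movingWindowH partialTheta
  rw [← tsum_mul_left, ← tsum_mul_left]
  refine tsum_congr fun t => ?_
  obtain ⟨k, hk⟩ := Nat.even_mul_succ_self t
  obtain ⟨b, hb⟩ := Int.even_mul_succ_self ((N : ℤ) - 1)
  have hkZ : (t : ℤ) * ((t : ℤ) + 1) = 2 * k := by exact_mod_cast (by omega : t * (t + 1) = 2 * k)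
  have hbZ : ((N : ℤ) - 1) * (N : ℤ) = 2 * b := by linarith [hb]
  -- exponent identities
  have e1 : t * (t + 1) / 2 = k := by omega
  have e2 : (((N : ℤ)) * ((N : ℤ) - 1)) / 2 = b := by
    rw [mul_comm, hbZ, Int.mul_ediv_cancel_left _ two_ne_zero]
  have e3 : (((t : ℤ) - N) * (((t : ℤ) - N) + 1)) / 2 = (k : ℤ) + (-(N : ℤ)) * t + b := by
    have h2 : ((t : ℤ) - N) * (((t : ℤ) - N) + 1) = 2 * ((k : ℤ) + (-(N : ℤ)) * t + b) := by
      linear_combination hkZ + hbZ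
    rw [h2, Int.mul_ediv_cancel_left _ two_ne_zero]
  -- sign
  have hsign : (-1 : ℂ) ^ ((t : ℤ) - (N : ℤ)) = (-1 : ℂ) ^ t * (-1 : ℂ) ^ N := by
    rw [zpow_sub₀ (by norm_num : (-1 : ℂ) ≠ 0)]
    have hself : ((-1 : ℂ) ^ ((N : ℤ)))⁻¹ = (-1 : ℂ) ^ ((N : ℤ)) :=
      inv_eq_of_mul_eq_one_right (by rw [← mul_zpow]; norm_num)
    rw [div_eq_mul_inv, hself, zpow_natCast, zpow_natCast]
  -- exp
  have hexp : ∀ z w : ℂ, Complex.exp ((z - w) * v)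
      = Complex.exp (z * v) * Complex.exp (-w * v) := by
    intro z w
    rw [← Complex.exp_add]
    congr 1
    ring
  -- q powers
  have hqpow : q ^ ((((t : ℤ) - N) * (((t : ℤ) - N) + 1)) / 2)
      = q ^ (t * (t + 1) / 2) * (q ^ (-(N : ℤ))) ^ t * q ^ ((((N : ℤ)) * ((N : ℤ) - 1)) / 2) := by
    rw [e3, e2, e1, zpow_add₀ hq0, zpow_add₀ hq0, zpow_mul, zpow_natCast, zpow_natCast]
  rw [hsign, hqpow, hexp, mul_pow,
    show (-q ^ (-(N:ℤ)) : ℂ) = (-1) * q ^ (-(N:ℤ)) by ring, mul_pow, ← Complex.exp_nat_mul]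
  push_cast
  ring

/-- double roots in the moving window: with `x = −q^{−N} e^u`,
`Θ(q,x) = ∂_x Θ(q,x) = 0` if and only if `H_N(q,u) = ∂_u H_N(q,u) = 0`. -/
theorem moving_window_double_roots (q : ℂ) (hq0 : q ≠ 0) (hq : ‖q‖ < 1)
    (N : ℕ) (hN : 1 ≤ N) (u x : ℂ)
    (hx : x = -q ^ (-(N : ℤ)) * Complex.exp u) :
    (partialTheta q x = 0 ∧ deriv (partialTheta q) x = 0) ↔
    (movingWindowH N q u = 0 ∧ deriv (movingWindowH N q) u = 0) := by
  set K : ℂ := (-1 : ℂ) ^ N * q ^ (((N : ℤ) * ((N : ℤ) - 1)) / 2) with hKdef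
  have hK : K ≠ 0 := mul_ne_zero (pow_ne_zero _ (by norm_num)) (zpow_ne_zero _ hq0)
  have hE : Complex.exp (-(N : ℂ) * u) ≠ 0 := Complex.exp_ne_zero _
  have hxne : x ≠ 0 := by
    rw [hx]
    exact mul_ne_zero (neg_ne_zero.mpr (zpow_ne_zero _ hq0)) (Complex.exp_ne_zero _)
  have hHfun : movingWindowH N q = fun v =>
      K * (Complex.exp (-(N : ℂ) * v) * partialTheta q (-q ^ (-(N : ℤ)) * Complex.exp v)) :=
    funext (movingWindowH_eq q hq0 N)
  -- derivative computation
  have hF : HasDerivAt (fun v => -q ^ (-(N : ℤ)) * Complex.exp v) x u := by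
    simpa [hx] using (Complex.hasDerivAt_exp u).const_mul (-q ^ (-(N : ℤ)))
  have hΘ : HasDerivAt (partialTheta q) (deriv (partialTheta q) x)
      (-q ^ (-(N : ℤ)) * Complex.exp u) := by
    rw [← hx]
    exact (partialTheta_differentiableAt q hq0 hq x).hasDerivAt
  have hcomp : HasDerivAt (fun v => partialTheta q (-q ^ (-(N : ℤ)) * Complex.exp v))
      (deriv (partialTheta q) x * x) u := hΘ.comp u (h := fun v => -q ^ (-(N : ℤ)) * Complex.exp v) hF
  have h0 : HasDerivAt (fun v : ℂ => -(N : ℂ) * v) (-(N : ℂ)) u := by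
    simpa using (hasDerivAt_id u).const_mul (-(N : ℂ))
  have he : HasDerivAt (fun v => Complex.exp (-(N : ℂ) * v))
      (Complex.exp (-(N : ℂ) * u) * (-(N : ℂ))) u :=
    (Complex.hasDerivAt_exp (-(N : ℂ) * u)).comp u h0
  have hprod : HasDerivAt (movingWindowH N q)
      (K * ((Complex.exp (-(N : ℂ) * u) * (-(N : ℂ))) *
          partialTheta q (-q ^ (-(N : ℤ)) * Complex.exp u) +
        Complex.exp (-(N : ℂ) * u) * (deriv (partialTheta q) x * x))) u := by
    rw [hHfun]
    exact (he.mul hcomp).const_mul K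
  have hderiv : deriv (movingWindowH N q) u
      = K * ((Complex.exp (-(N : ℂ) * u) * (-(N : ℂ))) * partialTheta q x +
        Complex.exp (-(N : ℂ) * u) * (deriv (partialTheta q) x * x)) := by
    rw [← hx] at hprod
    exact hprod.deriv
  have hval : movingWindowH N q u = K * (Complex.exp (-(N : ℂ) * u) * partialTheta q x) := by
    rw [movingWindowH_eq q hq0 N u, ← hx]
  constructor
  · rintro ⟨h1, h2⟩
    refine ⟨by rw [hval, h1]; ring, by rw [hderiv, h1, h2]; ring⟩
  · rintro ⟨h1, h2⟩
    have hΘ0 : partialTheta q x = 0 := by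
      rw [hval] at h1
      rcases mul_eq_zero.mp h1 with h | h
      · exact absurd h hK
      · rcases mul_eq_zero.mp h with h' | h'
        · exact absurd h' hE
        · exact h'
    refine ⟨hΘ0, ?_⟩
    rw [hderiv, hΘ0] at h2
    have h3 : Complex.exp (-(N : ℂ) * u) * (deriv (partialTheta q) x * x) = 0 := by
      have := mul_eq_zero.mp h2
      rcases this with h | h
      · exact absurd h hK
      · simpa using h
    rcases mul_eq_zero.mp h3 with h | h
    · exact absurd h hE
    · rcases mul_eq_zero.mp h with h' | h'
      · exact h'
      · exact absurd h' hxne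
end
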